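/- The Tiles UPB in ℂ³⊗ℂ³ is unextendible: there is no product state u⊗v (u,v ∈ ℂ³ nonzero) orthogonal to all five states |ψ₁⟩,…,|ψ₅⟩. -/

import Mathlib

noncomputable section

def ket {d : ℕ} (i : Fin d) : Fin d → ℂ := fun x => if x = i then 1 else 0

def tens {d₁ d₂ : ℕ} (u : Fin d₁ → ℂ) (v : Fin d₂ → ℂ) : Fin d₁ × Fin d₂ → ℂ :=
  fun p => u p.1 * v p.2

def inn {n : Type*} [Fintype n] (u v : n → ℂ) : ℂ := ∑ x, star (u x) * v x

def mm (i j : Fin 3) : Fin 3 → ℂ := fun x =>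
  if x = i then (Real.sqrt 2 : ℂ)⁻¹ else if x = j then -(Real.sqrt 2 : ℂ)⁻¹ else 0

def uni : Fin 3 → ℂ := fun _ => (Real.sqrt 3 : ℂ)⁻¹

/-- The five-state Tiles unextendible product basis in `ℂ³⊗ℂ³`. -/
def tiles : Fin 5 → (Fin 3 × Fin 3 → ℂ) :=
  ![tens (ket 0) (mm 0 1), tens (ket 2) (mm 1 2),
    tens (mm 0 1) (ket 2), tens (mm 1 2) (ket 0),
    tens uni uni]

lemma key (a b c x y z : ℂ)
    (h1 : a = 0 ∨ x = y) (h2 : c = 0 ∨ y = z) (h3 : a = b ∨ z = 0) (h4 : b = c ∨ x = 0)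
    (h5 : a + b + c = 0 ∨ x + y + z = 0) :
    (a = 0 ∧ b = 0 ∧ c = 0) ∨ (x = 0 ∧ y = 0 ∧ z = 0) := by
  rcases h1 with h1 | h1 <;> rcases h2 with h2 | h2 <;> rcases h3 with h3 | h3 <;>
    rcases h4 with h4 | h4 <;> rcases h5 with h5 | h5 <;> subst_vars <;>
    first
      | tauto
      | (left
         refine ⟨?_, ?_, ?_⟩ <;>
           first
             | linear_combination
             | linear_combination h5
             | linear_combination h5 / 2
             | linear_combination h5 / 3)
      | (right
         refine ⟨?_, ?_, ?_⟩ <;>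
           first
             | linear_combination
             | linear_combination h5
             | linear_combination h5 / 2
             | linear_combination h5 / 3)

/-- The Tiles UPB is unextendible: no nonzero product state `u⊗v` is orthogonal to all
five of its members. -/
theorem tiles_unextendible :
    ¬ ∃ u v : Fin 3 → ℂ, u ≠ 0 ∧ v ≠ 0 ∧ ∀ i : Fin 5, inn (tiles i) (tens u v) = 0 := by
  rintro ⟨u, v, hu, hv, h⟩
  have h1 := h 0
  have h2 := h 1
  have h3 := h 2
  have h4 := h 3
  have h5 := h 4
  simp only [tiles, Matrix.cons_val_zero, Matrix.cons_val_one, Matrix.cons_val_two,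
    Matrix.cons_val_three, Matrix.cons_val_four, Matrix.head_cons, Matrix.tail_cons]
      at h1 h2 h3 h4 h5
  simp only [inn, tens, ket, mm, uni, Fintype.sum_prod_type, Fin.sum_univ_three,
    Prod.fst_zero, Prod.snd_zero,
    show ((2:Fin 3) = 0) = False by simp [Fin.ext_iff], show ((2:Fin 3) = 1) = False by simp [Fin.ext_iff],
    show ((0:Fin 3) = 1) = False by simp [Fin.ext_iff], show ((0:Fin 3) = 2) = False by simp [Fin.ext_iff],
    show ((1:Fin 3) = 0) = False by simp [Fin.ext_iff], show ((1:Fin 3) = 2) = False by simp [Fin.ext_iff],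
    if_true, if_false, eq_self_iff_true, Complex.star_def, map_inv₀, map_neg,
    Complex.conj_ofReal, one_mul, mul_zero, zero_mul, mul_one, add_zero, zero_add,
    neg_mul, mul_neg, star_zero, star_one, neg_neg, map_zero, map_mul, map_one] at h1 h2 h3 h4 h5
  have s2 : (Real.sqrt 2 : ℂ) ≠ 0 := by
    simpa using Real.sqrt_ne_zero'.mpr (by norm_num)
  have s3 : (Real.sqrt 3 : ℂ) ≠ 0 := by
    simpa using Real.sqrt_ne_zero'.mpr (by norm_num)
  have e1 : u 0 = 0 ∨ v 0 = v 1 := by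
    rcases mul_eq_zero.mp (show u 0 * (v 0 - v 1) = 0 by
      field_simp at h1; linear_combination h1) with h | h
    · exact Or.inl h
    · exact Or.inr (by linear_combination h)
  have e2 : u 2 = 0 ∨ v 1 = v 2 := by
    rcases mul_eq_zero.mp (show u 2 * (v 1 - v 2) = 0 by
      field_simp at h2; linear_combination h2) with h | h
    · exact Or.inl h
    · exact Or.inr (by linear_combination h)
  have e3 : u 0 = u 1 ∨ v 2 = 0 := by
    rcases mul_eq_zero.mp (show (u 0 - u 1) * v 2 = 0 by
      field_simp at h3; linear_combination h3) with h | h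
    · exact Or.inl (by linear_combination h)
    · exact Or.inr h
  have e4 : u 1 = u 2 ∨ v 0 = 0 := by
    rcases mul_eq_zero.mp (show (u 1 - u 2) * v 0 = 0 by
      field_simp at h4; linear_combination h4) with h | h
    · exact Or.inl (by linear_combination h)
    · exact Or.inr h
  have e5 : u 0 + u 1 + u 2 = 0 ∨ v 0 + v 1 + v 2 = 0 := by
    exact mul_eq_zero.mp (show (u 0 + u 1 + u 2) * (v 0 + v 1 + v 2) = 0 by
      field_simp at h5; linear_combination h5)
  rcases key (u 0) (u 1) (u 2) (v 0) (v 1) (v 2) e1 e2 e3 e4 e5 with ⟨a0, a1, a2⟩ | ⟨b0, b1, b2⟩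
  · exact hu (by funext x; fin_cases x <;> assumption)
  · exact hv (by funext x; fin_cases x <;> assumption)
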